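/- Along the hash supply curve, perceived safety converges as the price vanishes: ς(P, H(P)) → Ψ(s*/σ) as P → 0⁺, and Ψ(s*/σ) ∈ (0,1). -/

import Mathlib

open Filter

/-- Along the hash supply curve, perceived safety converges as the price
vanishes: `ς(P, H(P)) → Ψ(s*/σ)` as `P → 0⁺`, and `Ψ(s*/σ) ∈ (0,1)`. -/
theorem safety_tendsto_at_zero_price
    (φ : ℝ → ℝ)
    (hφc : ContinuousOn φ (Set.Ici 0))
    (hφm : StrictMonoOn φ (Set.Ici 0))
    (hφ0 : 0 ≤ φ 0)
    (hφtop : Filter.Tendsto (fun H : ℝ => H * φ H) Filter.atTop Filter.atTop)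
    (B Φ : ℝ) (hB : 0 < B) (hΦ : 0 ≤ Φ)
    (Hs : ℝ → ℝ)
    (hHs : ∀ P : ℝ, 0 < P → 0 < Hs P ∧ Hs P * φ (Hs P) = P * (B + Φ))
    (Ψ : ℝ → ℝ)
    (hΨc : Continuous Ψ)
    (hΨm : StrictMono Ψ)
    (hΨ01 : ∀ x : ℝ, 0 < Ψ x ∧ Ψ x < 1)
    (hΨbot : Tendsto Ψ atBot (nhds 0))
    (hΨtop : Tendsto Ψ atTop (nhds 1))
    (g k σ sstar : ℝ) (hg : 0 < g) (hk : 0 < k) (hσ : 0 < σ) :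
    Tendsto (fun P : ℝ => Ψ ((sstar - g * P + k * Hs P) / σ))
        (nhdsWithin 0 (Set.Ioi 0)) (nhds (Ψ (sstar / σ))) ∧
      0 < Ψ (sstar / σ) ∧ Ψ (sstar / σ) < 1 := by
  have hBΦ : 0 < B + Φ := by linarith
  -- Hs tends to 0
  have hHs0 : Tendsto Hs (nhdsWithin 0 (Set.Ioi 0)) (nhds 0) := by
    rw [tendsto_order]
    constructor
    · intro a ha
      filter_upwards [self_mem_nhdsWithin] with P hP
      exact lt_trans ha (hHs P hP).1
    · intro b hb
      have hφb : 0 < φ b := lt_of_le_of_lt hφ0 (hφm (Set.mem_Ici.2 (le_refl 0)) (le_of_lt hb) hb)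
      have hδ : 0 < b * φ b / (B + Φ) := by positivity
      filter_upwards [Ioo_mem_nhdsGT_of_mem (Set.left_mem_Ico.2 hδ)] with P hP
      obtain ⟨hP1, hP2⟩ := hP
      obtain ⟨hpos, heq⟩ := hHs P hP1
      by_contra hle
      push_neg at hle
      have hφH : φ b ≤ φ (Hs P) := (hφm.monotoneOn (le_of_lt hb) (le_of_lt hpos)) hle
      have : b * φ b ≤ Hs P * φ (Hs P) :=
        mul_le_mul hle hφH (le_of_lt hφb) (le_of_lt hpos)
      rw [heq] at this
      have : P * (B + Φ) < b * φ b := by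
        calc P * (B + Φ) < (b * φ b / (B + Φ)) * (B + Φ) := by
              exact mul_lt_mul_of_pos_right hP2 hBΦ
          _ = b * φ b := by field_simp
      linarith
  have hP0 : Tendsto (fun P : ℝ => P) (nhdsWithin 0 (Set.Ioi 0)) (nhds 0) :=
    tendsto_id.mono_left nhdsWithin_le_nhds
  have harg : Tendsto (fun P : ℝ => (sstar - g * P + k * Hs P) / σ)
      (nhdsWithin 0 (Set.Ioi 0)) (nhds (sstar / σ)) := by
    have : Tendsto (fun P : ℝ => sstar - g * P + k * Hs P)
        (nhdsWithin 0 (Set.Ioi 0)) (nhds sstar) := by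
      have h1 : Tendsto (fun P : ℝ => sstar - g * P + k * Hs P)
          (nhdsWithin 0 (Set.Ioi 0)) (nhds (sstar - g * 0 + k * 0)) :=
        ((tendsto_const_nhds (x := sstar)).sub (hP0.const_mul g)).add (hHs0.const_mul k)
      simpa using h1
    simpa using this.div_const σ
  exact ⟨(hΨc.continuousAt.tendsto.comp harg), (hΨ01 _).1, (hΨ01 _).2⟩
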